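/- arXiv:2502.20109 — 2 statements merged into one kernel-verified Lean document; each statement's English description precedes it below -/
import Mathlib

section
/- Let q, a, x ∈ ℂ with 0 < |q| < 1, x ≠ 0, and 1 - a q^j x ≠ 0 for all 0 ≤ j ≤ n. Then for every n ≥ 1, the n-th iterate of the q-differential operator applied to the function t ↦ 1/(1 - a t), evaluated at x, equals (q;q)_n · a^n / (a x;q)_{n+1}. -/
/-- The finite q-shifted factorial (a;q)_n = ∏_{j=0}^{n-1} (1 - a q^j). -/
noncomputable def qPoch (q a : ℂ) (n : ℕ) : ℂ :=
  ∏ j ∈ Finset.range n, (1 - a * q ^ j)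

/-- The q-differential operator: (D_q f)(x) = (f(x) - f(qx))/x. -/
noncomputable def Dq (q : ℂ) (f : ℂ → ℂ) : ℂ → ℂ :=
  fun x => (f x - f (q * x)) / x

lemma qPoch_shift (q a x : ℂ) (m : ℕ) :
    qPoch q (a * x) (m + 1) = (1 - a * x) * qPoch q (a * (q * x)) m := by
  rw [qPoch, qPoch, Finset.prod_range_succ', mul_comm]
  congr 1
  · simp
  · apply Finset.prod_congr rfl
    intro j _
    ring_nf

lemma key (q a : ℂ) (hq : q ≠ 0) (n : ℕ) : ∀ (x : ℂ), x ≠ 0 →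
    (∀ j : ℕ, j ≤ n → 1 - a * q ^ j * x ≠ 0) →
    (Dq q)^[n] (fun t => 1 / (1 - a * t)) x =
      qPoch q q n * a ^ n / qPoch q (a * x) (n + 1) := by
  induction n with
  | zero =>
    intro x hx h
    simp [qPoch]
  | succ n ih =>
    intro x hx h
    have h1 : ∀ j : ℕ, j ≤ n → 1 - a * q ^ j * x ≠ 0 := fun j hj => h j (by omega)
    have h2 : ∀ j : ℕ, j ≤ n → 1 - a * q ^ j * (q * x) ≠ 0 := by
      intro j hj
      have := h (j + 1) (by omega)
      have e : 1 - a * q ^ j * (q * x) = 1 - a * q ^ (j + 1) * x := by ring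
      rw [e]; exact this
    have hx' : q * x ≠ 0 := mul_ne_zero hq hx
    rw [Function.iterate_succ_apply']
    simp only [Dq]
    rw [ih x hx h1, ih (q * x) hx' h2]
    -- rewrite denominators
    rw [qPoch_shift q a x (n + 1), qPoch_shift q a x n]
    rw [show qPoch q (a * (q * x)) (n + 1)
        = qPoch q (a * (q * x)) n * (1 - a * (q * x) * q ^ n) from
      Finset.prod_range_succ _ _]
    rw [show qPoch q q (n + 1) = qPoch q q n * (1 - q * q ^ n) from
      Finset.prod_range_succ _ _]
    have hP : qPoch q (a * (q * x)) n ≠ 0 := by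
      rw [qPoch]
      apply Finset.prod_ne_zero_iff.mpr
      intro j hj
      have := h (j + 1) (by simp at hj; omega)
      have e : 1 - a * (q * x) * q ^ j = 1 - a * q ^ (j + 1) * x := by ring
      rw [e]; exact this
    have h0 : 1 - a * x ≠ 0 := by
      have := h 0 (by omega); simpa using this
    have hlast : 1 - a * (q * x) * q ^ n ≠ 0 := by
      have := h (n + 1) (by omega)
      have e : 1 - a * (q * x) * q ^ n = 1 - a * q ^ (n + 1) * x := by ring
      rw [e]; exact this
    rw [div_sub_div _ _ (mul_ne_zero h0 hP) (mul_ne_zero hP hlast), div_div,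
      div_eq_div_iff (mul_ne_zero (mul_ne_zero (mul_ne_zero h0 hP) (mul_ne_zero hP hlast)) hx)
        (mul_ne_zero h0 (mul_ne_zero hP hlast))]
    ring

theorem stmt0 (q a x : ℂ) (hq0 : 0 < ‖q‖) (hq1 : ‖q‖ < 1)
    (hx : x ≠ 0) (n : ℕ) (hn : 1 ≤ n)
    (h : ∀ j : ℕ, j ≤ n → 1 - a * q ^ j * x ≠ 0) :
    (Dq q)^[n] (fun t => 1 / (1 - a * t)) x =
      qPoch q q n * a ^ n / qPoch q (a * x) (n + 1) := by
  have hq : q ≠ 0 := by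
    intro hq; simp [hq] at hq0
  exact key q a hq n x hx h
end

section
/- Let q, a, x ∈ ℂ with 0 < |q| < 1, x ≠ 0, and let k, n ∈ ℕ with k ≤ n and 1 - a q^j x ≠ 0 for all 0 ≤ j ≤ n + k - 1. Then the k-th iterate of the q-differential operator applied to the function t ↦ t^n/(a t;q)_n, evaluated at x, equals ((q;q)_n/(a x;q)_n) · ∑_{i=0}^{k} [k choose i]_q · (q^n;q)_{k-i} (a x;q)_i a^{k-i} x^{n-i} / ((q;q)_{n-i} (a q^n x;q)_k). -/
noncomputable def qBinom (q : ℂ) (n k : ℕ) : ℂ :=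
  qPoch q q n / (qPoch q q k * qPoch q q (n - k))

lemma qPoch_zero (q a : ℂ) : qPoch q a 0 = 1 := by simp [qPoch]

lemma qPoch_succ (q a : ℂ) (n : ℕ) : qPoch q a (n+1) = qPoch q a n * (1 - a * q ^ n) :=
  Finset.prod_range_succ _ _

lemma qPoch_succ' (q a : ℂ) (n : ℕ) : qPoch q a (n+1) = (1 - a) * qPoch q (a * q) n := by
  unfold qPoch
  rw [Finset.prod_range_succ', mul_comm]
  congr 1
  · simp
  · exact Finset.prod_congr rfl (fun j _ => by ring)

lemma qPoch_add (q a : ℂ) (m n : ℕ) :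
    qPoch q a (m + n) = qPoch q a m * qPoch q (a * q ^ m) n := by
  unfold qPoch
  rw [Finset.prod_range_add]
  congr 1
  exact Finset.prod_congr rfl (fun j _ => by rw [pow_add]; ring)

lemma qPoch_ne_zero (q a : ℂ) (n : ℕ) (h : ∀ j < n, 1 - a * q ^ j ≠ 0) :
    qPoch q a n ≠ 0 := by
  unfold qPoch
  rw [Finset.prod_ne_zero_iff]
  intro j hj
  exact h j (Finset.mem_range.mp hj)

lemma qq_ne_zero (q : ℂ) (hq1 : ‖q‖ < 1) (n : ℕ) : qPoch q q n ≠ 0 := by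
  apply qPoch_ne_zero
  intro j _ hz
  have hq : q * q ^ j = 1 := by linear_combination -hz
  have : ‖q * q ^ j‖ < 1 := by
    rw [norm_mul, norm_pow]
    calc ‖q‖ * ‖q‖ ^ j ≤ ‖q‖ * 1 := by
          apply mul_le_mul_of_nonneg_left _ (norm_nonneg q)
          exact pow_le_one₀ (norm_nonneg q) hq1.le
      _ < 1 := by simpa using hq1
  rw [hq] at this
  simp at this

lemma Dq_pow (q : ℂ) (hq : q ≠ 0) (hq1 : ‖q‖ < 1) (n : ℕ) :
    ∀ i ≤ n, ∀ x : ℂ, x ≠ 0 →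
      (Dq q)^[i] (fun t => t ^ n) x = qPoch q q n / qPoch q q (n - i) * x ^ (n - i) := by
  intro i
  induction i with
  | zero =>
    intro _ x hx
    simp [div_self (qq_ne_zero q hq1 n)]
  | succ i ih =>
    intro hin x hx
    rw [Function.iterate_succ_apply']
    show ((Dq q)^[i] _ x - (Dq q)^[i] _ (q * x)) / x = _
    rw [ih (by omega) x hx, ih (by omega) (q * x) (mul_ne_zero hq hx)]
    obtain ⟨m, hm⟩ : ∃ m, n - i = m + 1 := ⟨n - (i+1), by omega⟩
    have hm2 : n - (i + 1) = m := by omega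
    rw [hm, hm2, qPoch_succ q q m]
    have h1 : qPoch q q m ≠ 0 := qq_ne_zero q hq1 m
    have h2 : (1 - q * q ^ m) ≠ 0 := by
      intro hz
      exact qq_ne_zero q hq1 (m+1) (by rw [qPoch_succ, hz, mul_zero])
    field_simp
    ring

lemma Dq_inv (q a : ℂ) (hq : q ≠ 0) (n : ℕ) :
    ∀ m, ∀ x : ℂ, x ≠ 0 → (∀ j < n + m, 1 - a * q ^ j * x ≠ 0) →
      (Dq q)^[m] (fun t => 1 / qPoch q (a * t) n) x
        = a ^ m * qPoch q (q ^ n) m / qPoch q (a * x) (n + m) := by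
  intro m
  induction m with
  | zero => intro x hx h; simp [qPoch_zero]
  | succ m ih =>
    intro x hx h
    rw [Function.iterate_succ_apply']
    show ((Dq q)^[m] _ x - (Dq q)^[m] _ (q * x)) / x = _
    rw [ih x hx (fun j hj => h j (by omega)),
        ih (q * x) (mul_ne_zero hq hx) (by
          intro j hj
          have e : a * q ^ j * (q * x) = a * q ^ (j+1) * x := by ring
          rw [e]; exact h (j+1) (by omega))]
    have key : qPoch q (a * (q * x)) (n + m) = qPoch q (a * x * q) (n + m) := by
      congr 1; ring
    have key2 : qPoch q (a * x) (n + m + 1) = (1 - a * x) * qPoch q (a * x * q) (n + m) :=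
      qPoch_succ' q (a * x) (n + m)
    have hax : ∀ j < n + m + 1, (1 - (a * x) * q ^ j) ≠ 0 := by
      intro j hj
      have := h j (by omega)
      intro hz; apply this; linear_combination hz
    have h1 : qPoch q (a * x) (n + m) ≠ 0 :=
      qPoch_ne_zero _ _ _ (fun j hj => hax j (by omega))
    have h3 : qPoch q (a * x) (n + m + 1) ≠ 0 := qPoch_ne_zero _ _ _ hax
    have h2 : qPoch q (a * x * q) (n + m) ≠ 0 := by
      intro hz; apply h3; rw [key2, hz, mul_zero]
    have h0 : (1 - a * x) ≠ 0 := by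
      have := hax 0 (by omega); simpa using this
    have hlast : (1 - a * x * q ^ (n + m)) ≠ 0 := by
      have := hax (n+m) (by omega); exact this
    rw [key, show n + (m+1) = (n + m) + 1 from rfl, qPoch_succ q (a*x) (n+m),
        qPoch_succ q (q^n) m]
    have key3 : qPoch q (a * x * q) (n + m) = qPoch q (a*x) (n+m) * (1 - a * x * q ^ (n+m)) / (1 - a*x) := by
      rw [eq_div_iff h0]
      linear_combination (qPoch_succ q (a*x) (n+m)) - key2
      
    rw [key3]
    field_simp
    ring

lemma qBinom_zero (q : ℂ) (hq1 : ‖q‖ < 1) (m : ℕ) : qBinom q m 0 = 1 := by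
  unfold qBinom
  rw [qPoch_zero, Nat.sub_zero, one_mul, div_self (qq_ne_zero q hq1 m)]

lemma qBinom_self (q : ℂ) (hq1 : ‖q‖ < 1) (m : ℕ) : qBinom q m m = 1 := by
  unfold qBinom
  rw [Nat.sub_self, qPoch_zero, mul_one, div_self (qq_ne_zero q hq1 m)]

lemma one_sub_q_pow_ne (q : ℂ) (hq1 : ‖q‖ < 1) (m : ℕ) : (1 - q * q ^ m) ≠ 0 := by
  intro hz
  exact qq_ne_zero q hq1 (m+1) (by rw [qPoch_succ, hz, mul_zero])

lemma qPascal (q : ℂ) (hq1 : ‖q‖ < 1) (i k : ℕ) (hik : i < k) :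
    qBinom q (k+1) (i+1) = q ^ (i+1) * qBinom q k (i+1) + qBinom q k i := by
  obtain ⟨m, rfl⟩ : ∃ m, k = i + m + 1 := ⟨k - i - 1, by omega⟩
  unfold qBinom
  rw [show i + m + 1 + 1 - (i + 1) = m + 1 from by omega,
      show i + m + 1 - (i + 1) = m from by omega,
      show i + m + 1 - i = m + 1 from by omega,
      show i + m + 1 + 1 = (i + m + 1) + 1 from rfl,
      qPoch_succ q q (i+m+1), qPoch_succ q q m, qPoch_succ q q i]
  have hP1 := qq_ne_zero q hq1 (i+m+1)
  have hP2 := qq_ne_zero q hq1 i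
  have hP3 := qq_ne_zero q hq1 m
  have h1 := one_sub_q_pow_ne q hq1 i
  have h2 := one_sub_q_pow_ne q hq1 m
  have h3 := one_sub_q_pow_ne q hq1 (i+m+1)
  field_simp
  ring

lemma qLeibniz (q : ℂ) (hq : q ≠ 0) (hq1 : ‖q‖ < 1) (f g : ℂ → ℂ) :
    ∀ k, ∀ x : ℂ, x ≠ 0 →
      (Dq q)^[k] (fun t => f t * g t) x =
        ∑ i ∈ Finset.range (k+1),
          qBinom q k i * (Dq q)^[i] f x * (Dq q)^[k-i] g (q ^ i * x) := by
  have hF : ∀ (f : ℂ → ℂ) (i : ℕ) (y : ℂ), y ≠ 0 →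
      (Dq q)^[i] f (q * y) = (Dq q)^[i] f y - y * (Dq q)^[i+1] f y := by
    intro f i y hy
    rw [Function.iterate_succ_apply']
    show _ = _ - y * (((Dq q)^[i] f y - (Dq q)^[i] f (q * y)) / y)
    field_simp
    ring
  intro k
  induction k with
  | zero =>
    intro x hx
    simp [qBinom_self q hq1 0]
  | succ k ih =>
    intro x hx
    rw [Function.iterate_succ_apply']
    show ((Dq q)^[k] _ x - (Dq q)^[k] _ (q * x)) / x = _
    rw [ih x hx, ih (q * x) (mul_ne_zero hq hx), div_eq_iff hx]
    -- abbreviations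
    set F : ℕ → ℂ := fun i => (Dq q)^[i] f x with hFdef
    have hT : ∀ i j : ℕ, (Dq q)^[j] g (q ^ i * x) =
        (Dq q)^[j] g (q ^ (i+1) * x) + (q ^ i * x) * (Dq q)^[j+1] g (q ^ i * x) := by
      intro i j
      have e : q ^ (i+1) * x = q * (q ^ i * x) := by ring
      rw [e, hF g j (q ^ i * x) (mul_ne_zero (pow_ne_zero i hq) hx)]
      ring
    have hFq : ∀ i : ℕ, (Dq q)^[i] f (q * x) = F i - x * F (i+1) := fun i => hF f i x hx
    -- rewrite the difference of sums
    have step1 :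
        (∑ i ∈ Finset.range (k+1), qBinom q k i * (Dq q)^[i] f x * (Dq q)^[k-i] g (q ^ i * x))
        - (∑ i ∈ Finset.range (k+1), qBinom q k i * (Dq q)^[i] f (q*x) * (Dq q)^[k-i] g (q ^ i * (q*x)))
        = (∑ i ∈ Finset.range (k+1), qBinom q k i * q ^ i * F i * (Dq q)^[k+1-i] g (q ^ i * x)) * x
          + (∑ i ∈ Finset.range (k+1), qBinom q k i * F (i+1) * (Dq q)^[k-i] g (q ^ (i+1) * x)) * x := by
      rw [← Finset.sum_sub_distrib, Finset.sum_mul, Finset.sum_mul, ← Finset.sum_add_distrib]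
      apply Finset.sum_congr rfl
      intro i hi
      have hik : i ≤ k := Nat.lt_succ_iff.mp (Finset.mem_range.mp hi)
      rw [show q ^ i * (q * x) = q ^ (i+1) * x from by ring, hFq i,
          hT i (k-i), show k - i + 1 = k + 1 - i from by omega]
      ring
    have main : ∑ i ∈ Finset.range (k+1+1), qBinom q (k+1) i * F i * (Dq q)^[k+1-i] g (q^i*x)
        = (∑ i ∈ Finset.range (k+1), qBinom q k i * q^i * F i * (Dq q)^[k+1-i] g (q^i*x))
          + ∑ i ∈ Finset.range (k+1), qBinom q k i * F (i+1) * (Dq q)^[k-i] g (q^(i+1)*x) := by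
      rw [Finset.sum_range_succ, Finset.sum_range_succ']
      rw [Finset.sum_range_succ' (fun i => qBinom q k i * q^i * F i * (Dq q)^[k+1-i] g (q^i*x)) k]
      rw [Finset.sum_range_succ (fun i => qBinom q k i * F (i+1) * (Dq q)^[k-i] g (q^(i+1)*x)) k]
      have e1 : ∀ i ∈ Finset.range k,
          qBinom q (k+1) (i+1) * F (i+1) * (Dq q)^[k+1-(i+1)] g (q^(i+1)*x)
          = qBinom q k (i+1) * q^(i+1) * F (i+1) * (Dq q)^[k+1-(i+1)] g (q^(i+1)*x)
            + qBinom q k i * F (i+1) * (Dq q)^[k-i] g (q^(i+1)*x) := by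
        intro i hi
        have hik : i < k := Finset.mem_range.mp hi
        rw [qPascal q hq1 i k hik, show k+1-(i+1) = k-i from by omega]
        ring
      rw [Finset.sum_congr rfl e1, Finset.sum_add_distrib]
      rw [qBinom_zero q hq1 (k+1), qBinom_self q hq1 (k+1), qBinom_zero q hq1 k,
          qBinom_self q hq1 k, show k+1-0 = k+1 from rfl,
          show k+1-(k+1) = 0 from by omega, show k - k = 0 from by omega]
      ring
    rw [step1, main]
    ring

theorem stmt2 (q a x : ℂ) (hq0 : 0 < ‖q‖) (hq1 : ‖q‖ < 1)
    (hx : x ≠ 0) (k n : ℕ) (hkn : k ≤ n)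
    (h : ∀ j : ℕ, j < n + k → 1 - a * q ^ j * x ≠ 0) :
    (Dq q)^[k] (fun t => t ^ n / qPoch q (a * t) n) x =
      qPoch q q n / qPoch q (a * x) n *
        ∑ i ∈ Finset.range (k + 1),
          qBinom q k i *
            (qPoch q (q ^ n) (k - i) * qPoch q (a * x) i * a ^ (k - i) * x ^ (n - i)) /
            (qPoch q q (n - i) * qPoch q (a * q ^ n * x) k) := by
  have hq : q ≠ 0 := by
    intro hz; rw [hz] at hq0; simp at hq0
  have hfun : (fun t : ℂ => t ^ n / qPoch q (a * t) n)
      = (fun t : ℂ => (fun s : ℂ => s ^ n) t * (fun s : ℂ => 1 / qPoch q (a * s) n) t) := by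
    funext t; exact div_eq_mul_one_div _ _
  rw [hfun, qLeibniz q hq hq1 _ _ k x hx, Finset.mul_sum]
  apply Finset.sum_congr rfl
  intro i hi
  have hik : i ≤ k := Nat.lt_succ_iff.mp (Finset.mem_range.mp hi)
  have hin : i ≤ n := le_trans hik hkn
  rw [Dq_pow q hq hq1 n i hin x hx,
      Dq_inv q a hq n (k - i) (q ^ i * x) (mul_ne_zero (pow_ne_zero i hq) hx)
        (by
          intro j hj
          rw [show a * q ^ j * (q ^ i * x) = a * q ^ (j + i) * x from by rw [pow_add]; ring]
          exact h (j + i) (by omega))]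
  -- notation for the pieces
  have hax : ∀ m ≤ n + k, qPoch q (a * x) m ≠ 0 := by
    intro m hm
    apply qPoch_ne_zero
    intro j hj hz
    exact h j (by omega) (by linear_combination hz)
  have key1 : qPoch q (a * (q ^ i * x)) (n + (k - i)) = qPoch q (a * x * q ^ i) (n + k - i) := by
    rw [show n + (k - i) = n + k - i from by omega]
    congr 1; ring
  have key2 : qPoch q (a * x) i * qPoch q (a * x * q ^ i) (n + k - i) = qPoch q (a * x) (n + k) := by
    rw [← qPoch_add, show i + (n + k - i) = n + k from by omega]
  have key3 : qPoch q (a * x) n * qPoch q (a * x * q ^ n) k = qPoch q (a * x) (n + k) :=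
    (qPoch_add q (a * x) n k).symm
  have key4 : qPoch q (a * q ^ n * x) k = qPoch q (a * x * q ^ n) k := by
    congr 1; ring
  have h1 : qPoch q (a * x) i ≠ 0 := hax i (by omega)
  have h2 : qPoch q (a * x) n ≠ 0 := hax n (by omega)
  have h3 : qPoch q (a * x) (n + k) ≠ 0 := hax (n + k) le_rfl
  have h4 : qPoch q (a * x * q ^ i) (n + k - i) ≠ 0 := by
    intro hz; apply h3; rw [← key2, hz, mul_zero]
  have h5 : qPoch q (a * x * q ^ n) k ≠ 0 := by
    intro hz; apply h3; rw [← key3, hz, mul_zero]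
  have h6 : qPoch q q (n - i) ≠ 0 := qq_ne_zero q hq1 (n - i)
  rw [key1, key4]
  have e : qPoch q (a * x * q ^ i) (n + k - i) = qPoch q (a * x) n * qPoch q (a * x * q ^ n) k / qPoch q (a * x) i := by
    rw [eq_div_iff h1, key3, mul_comm, key2]
  rw [e]
  field_simp
end
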